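/- Let ρ and ω be density matrices on ℂ^n and assume ρ is pure (ρ·ρ = ρ). Then the only coupling of ρ and ω is the product state: every density matrix Π indexed by Fin n × Fin n satisfying trace(Π · (B ⊗ₖ 1)) = trace(ω · B) and trace(Π · (1 ⊗ₖ Bᵀ)) = trace(ρ · B) for all complex n×n matrices B equals ω ⊗ₖ ρᵀ. -/

import Mathlib

open Kronecker Matrix
open scoped ComplexOrder

/-- `costOp p A` is the cost operator `|A ⊗ₖ 1 - 1 ⊗ₖ Aᵀ|^p`, where `|·|^p` is the
functional calculus applied with `x ↦ |x| ^ p` (real rpow). -/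
noncomputable def costOp {n : ℕ} (p : ℝ) (A : Matrix (Fin n) (Fin n) ℂ) :
    Matrix (Fin n × Fin n) (Fin n × Fin n) ℂ :=
  cfc (fun x : ℝ => |x| ^ p)
    (A ⊗ₖ (1 : Matrix (Fin n) (Fin n) ℂ) - (1 : Matrix (Fin n) (Fin n) ℂ) ⊗ₖ Aᵀ)

/-- A density matrix: positive semidefinite with unit trace. -/
def IsDensity {m : Type*} [Fintype m] (ρ : Matrix m m ℂ) : Prop :=
  ρ.PosSemidef ∧ ρ.trace = 1

/-- `P` is a coupling of the density matrices `ρ` and `ω`. -/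
def IsCoupling {n : ℕ} (ρ ω : Matrix (Fin n) (Fin n) ℂ)
    (P : Matrix (Fin n × Fin n) (Fin n × Fin n) ℂ) : Prop :=
  IsDensity P ∧ ∀ B : Matrix (Fin n) (Fin n) ℂ,
    (P * (B ⊗ₖ (1 : Matrix (Fin n) (Fin n) ℂ))).trace = (ω * B).trace ∧
    (P * ((1 : Matrix (Fin n) (Fin n) ℂ) ⊗ₖ Bᵀ)).trace = (ρ * B).trace

/-- The optimal transport cost between `α` and `β` for the cost operator `C`. -/
noncomputable def wcost {n : ℕ} (C : Matrix (Fin n × Fin n) (Fin n × Fin n) ℂ)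
    (α β : Matrix (Fin n) (Fin n) ℂ) : ℝ :=
  sInf {x : ℝ | ∃ P, IsCoupling α β P ∧ x = (P * C).trace.re}

lemma aux_traceMulSelf {m : Type*} [Fintype m] {M : Matrix m m ℂ}
    (h : (Mᴴ * M).trace = 0) : M = 0 := by
  have key : ∑ j, ∑ i, Complex.normSq (M i j) = 0 := by
    have h5 : (Mᴴ * M).trace = ((∑ j, ∑ i, Complex.normSq (M i j) : ℝ) : ℂ) := by
      simp only [Matrix.trace, Matrix.diag, Matrix.mul_apply, Matrix.conjTranspose_apply]
      push_cast
      refine Finset.sum_congr rfl fun j _ => Finset.sum_congr rfl fun i _ => ?_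
      rw [mul_comm, Complex.star_def, Complex.mul_conj]
    rw [h5] at h
    exact_mod_cast h
  ext i j
  have h1 : ∀ j ∈ Finset.univ, (0:ℝ) ≤ ∑ i, Complex.normSq (M i j) := by
    intro j _; exact Finset.sum_nonneg fun i _ => Complex.normSq_nonneg _
  have h2 := (Finset.sum_eq_zero_iff_of_nonneg h1).mp key j (Finset.mem_univ j)
  have h3 : ∀ i ∈ Finset.univ, (0:ℝ) ≤ Complex.normSq (M i j) := by
    intro i _; exact Complex.normSq_nonneg _
  have h4 := (Finset.sum_eq_zero_iff_of_nonneg h3).mp h2 i (Finset.mem_univ i)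
  simpa using Complex.normSq_eq_zero.mp h4

lemma aux_psd_mul_eq_zero {m : Type*} [Fintype m] [DecidableEq m]
    {A B : Matrix m m ℂ} (hA : A.PosSemidef) (hB : B.PosSemidef)
    (h : (A * B).trace = 0) : A * B = 0 := by
  open scoped MatrixOrder in set C := CFC.sqrt A with hC
  open scoped MatrixOrder in set D := CFC.sqrt B with hD
  have hCh : Cᴴ = C := by open scoped MatrixOrder in exact (CFC.sqrt_nonneg A).posSemidef.1
  have hDh : Dᴴ = D := by open scoped MatrixOrder in exact (CFC.sqrt_nonneg B).posSemidef.1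
  have hCC : C * C = A := by open scoped MatrixOrder in exact CFC.sqrt_mul_sqrt_self A hA.nonneg
  have hDD : D * D = B := by open scoped MatrixOrder in exact CFC.sqrt_mul_sqrt_self B hB.nonneg
  have htr : ((D * C)ᴴ * (D * C)).trace = 0 := by
    have : (D * C)ᴴ * (D * C) = C * ((D * D) * C) := by
      rw [Matrix.conjTranspose_mul, hCh, hDh]; noncomm_ring
    rw [this, Matrix.trace_mul_comm, Matrix.mul_assoc, hCC, hDD, Matrix.trace_mul_comm, h]
  have hDC : D * C = 0 := aux_traceMulSelf htr
  have hCD : C * D = 0 := by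
    have := congrArg conjTranspose hDC
    rwa [Matrix.conjTranspose_mul, hCh, hDh, Matrix.conjTranspose_zero] at this
  calc A * B = C * (C * D) * D := by rw [← hCC, ← hDD]; noncomm_ring
  _ = 0 := by rw [hCD]; simp

lemma aux_pure_vec {n : ℕ} {ρ : Matrix (Fin n) (Fin n) ℂ}
    (hρ : ρ.PosSemidef) (htr : ρ.trace = 1) (hpure : ρ * ρ = ρ) :
    ∃ v : Fin n → ℂ, (∀ i j, ρ i j = v i * star (v j)) := by
  have hH : ρ.IsHermitian := hρ.1
  set U : Matrix (Fin n) (Fin n) ℂ := (hH.eigenvectorUnitary : Matrix (Fin n) (Fin n) ℂ) with hU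
  set lam := hH.eigenvalues with hlam
  set D : Matrix (Fin n) (Fin n) ℂ := Matrix.diagonal (RCLike.ofReal ∘ lam) with hDdef
  have hspec : ρ = U * D * star U := hH.spectral_theorem
  have hUU : U * star U = 1 := Matrix.mem_unitaryGroup_iff.mp hH.eigenvectorUnitary.2
  have hUU' : star U * U = 1 := Matrix.mem_unitaryGroup_iff'.mp hH.eigenvectorUnitary.2
  -- D * D = D
  have hDD : D * D = D := by
    have h1 : (U * D * star U) * (U * D * star U) = U * D * star U := by
      rw [← hspec]; exact hpure
    have h2 := congrArg (fun M => star U * M * U) h1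
    have hrem : ∀ X : Matrix (Fin n) (Fin n) ℂ, star U * (U * X) = X := fun X => by
      rw [← Matrix.mul_assoc, hUU', Matrix.one_mul]
    simp only [Matrix.mul_assoc] at h2
    simpa only [hUU', Matrix.mul_one, hrem] using h2
  -- eigenvalues are 0 or 1
  have hlam01 : ∀ k, lam k = 0 ∨ lam k = 1 := by
    intro k
    have : ((lam k : ℂ)) * (lam k : ℂ) = (lam k : ℂ) := by
      have := congrFun (congrFun hDD k) k
      simpa [hDdef, Matrix.mul_apply, Matrix.diagonal_apply, Finset.sum_ite_eq] using this
    have hr : lam k * lam k = lam k := by exact_mod_cast this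
    have h0 : lam k * (lam k - 1) = 0 := by linear_combination hr
    rcases mul_eq_zero.mp h0 with h | h
    · exact Or.inl h
    · exact Or.inr (by linarith)
  -- sum of eigenvalues = 1
  have hsum : ∑ k, lam k = 1 := by
    have h1 : ρ.trace = ∑ k, (lam k : ℂ) := by
      rw [hspec, Matrix.trace_mul_comm, ← Matrix.mul_assoc, hUU', Matrix.one_mul, hDdef,
        Matrix.trace_diagonal]
      rfl
    rw [htr] at h1
    exact_mod_cast h1.symm
  -- exactly one eigenvalue is 1
  have hex : ∃ k0, lam k0 = 1 := by
    by_contra hc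
    push_neg at hc
    have : ∀ k ∈ Finset.univ, lam k = 0 := fun k _ => (hlam01 k).resolve_right (hc k)
    rw [Finset.sum_eq_zero this] at hsum
    norm_num at hsum
  obtain ⟨k0, hk0⟩ := hex
  have hrest : ∀ k, k ≠ k0 → lam k = 0 := by
    intro k hk
    have hsplit : ∑ j ∈ Finset.univ.erase k0, lam j = 0 := by
      have := Finset.add_sum_erase Finset.univ lam (Finset.mem_univ k0)
      rw [hsum, hk0] at this
      linarith
    have hnn : ∀ j ∈ Finset.univ.erase k0, (0:ℝ) ≤ lam j := fun j _ =>
      hρ.eigenvalues_nonneg j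
    exact (Finset.sum_eq_zero_iff_of_nonneg hnn).mp hsplit k
      (Finset.mem_erase.mpr ⟨hk, Finset.mem_univ k⟩)
  refine ⟨fun i => U i k0, fun i j => ?_⟩
  have : ρ i j = ∑ a, U i a * (lam a : ℂ) * star (U j a) := by
    rw [hspec]
    simp [Matrix.mul_apply, hDdef, Matrix.diagonal_apply, Finset.sum_ite_eq,
      Matrix.conjTranspose_apply, Finset.sum_mul]
  rw [this, Finset.sum_eq_single k0]
  · rw [hk0]; push_cast; ring
  · intro a _ ha
    rw [hrest a ha]; push_cast; ring
  · intro h; exact absurd (Finset.mem_univ k0) h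

/-- If `ρ` is pure, the only coupling of `ρ` and `ω` is the product state `ω ⊗ₖ ρᵀ`. -/
theorem coupling_unique_of_pure {n : ℕ} (ρ ω : Matrix (Fin n) (Fin n) ℂ)
    (hρ : IsDensity ρ) (hω : IsDensity ω) (hρpure : ρ * ρ = ρ)
    (P : Matrix (Fin n × Fin n) (Fin n × Fin n) ℂ) (hP : IsCoupling ρ ω P) :
    P = ω ⊗ₖ ρᵀ := by
  obtain ⟨⟨hPpsd, hPtr⟩, hmarg⟩ := hP
  obtain ⟨hρpsd, hρtr⟩ := hρ
  set Q : Matrix (Fin n × Fin n) (Fin n × Fin n) ℂ :=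
    (1 : Matrix (Fin n) (Fin n) ℂ) ⊗ₖ ρᵀ with hQdef
  have hQherm : Qᴴ = Q := by
    ext ⟨i, a⟩ ⟨j, b⟩
    simp only [hQdef, Matrix.conjTranspose_apply, Matrix.kroneckerMap_apply,
      Matrix.transpose_apply, star_mul', Matrix.one_apply]
    rw [hρpsd.1.apply b a]
    congr 1
    simp [eq_comm, apply_ite (star : ℂ → ℂ)]
  have hQQ : Q * Q = Q := by
    rw [hQdef, ← Matrix.mul_kronecker_mul, Matrix.one_mul, ← Matrix.transpose_mul, hρpure]
  have hQpsd : Q.PosSemidef := by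
    have h : Qᴴ * Q = Q := by rw [hQherm, hQQ]
    exact h ▸ Matrix.posSemidef_conjTranspose_mul_self Q
  have h1mQpsd : (1 - Q).PosSemidef := by
    have hh : (1 - Q)ᴴ = 1 - Q := by
      rw [Matrix.conjTranspose_sub, Matrix.conjTranspose_one, hQherm]
    have hsq : (1 - Q) * (1 - Q) = 1 - Q := by
      have : (1 - Q) * (1 - Q) = 1 - Q - Q + Q * Q := by noncomm_ring
      rw [this, hQQ]; abel
    have h : (1 - Q)ᴴ * (1 - Q) = 1 - Q := by rw [hh, hsq]
    exact h ▸ Matrix.posSemidef_conjTranspose_mul_self (1 - Q)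
  have htrPQ : (P * Q).trace = 1 := by
    have := (hmarg ρ).2
    rw [hρpure, hρtr] at this
    exact this
  have htr0 : (P * (1 - Q)).trace = 0 := by
    rw [Matrix.mul_sub, Matrix.mul_one, Matrix.trace_sub, hPtr, htrPQ, sub_self]
  have hP1mQ : P * (1 - Q) = 0 := aux_psd_mul_eq_zero hPpsd h1mQpsd htr0
  have hPQ : P * Q = P := by
    have h0 : P * 1 - P * Q = 0 := by rw [← Matrix.mul_sub, hP1mQ]
    rw [Matrix.mul_one] at h0
    exact (sub_eq_zero.mp h0).symm
  have hQP : Q * P = P := by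
    have h1 : (P * Q)ᴴ = Q * P := by rw [Matrix.conjTranspose_mul, hQherm, hPpsd.1]
    rw [hPQ, hPpsd.1] at h1
    exact h1.symm
  have hQPQ : P = Q * P * Q := by rw [Matrix.mul_assoc, hPQ, hQP]
  obtain ⟨v, hv⟩ := aux_pure_vec hρpsd hρtr hρpure
  have hv1 : ∑ c, v c * star (v c) = 1 := by
    have : ρ.trace = ∑ c, v c * star (v c) := by
      rw [Matrix.trace]
      exact Finset.sum_congr rfl fun c _ => hv c c
    rw [← this, hρtr]
  set N : Fin n → Fin n → ℂ := fun i j => ∑ d, ∑ c, star (v d) * v c * P (i, c) (j, d)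
    with hNdef
  have hentry : ∀ i a j b, P (i, a) (j, b) = star (v a) * v b * N i j := by
    intro i a j b
    have hQl : ∀ y, (Q * P) (i, a) y = star (v a) * ∑ c, v c * P (i, c) y := by
      intro y
      rw [Matrix.mul_apply, Fintype.sum_prod_type]
      rw [Finset.sum_eq_single i]
      · rw [Finset.mul_sum]
        refine Finset.sum_congr rfl fun c _ => ?_
        simp only [hQdef, Matrix.kroneckerMap_apply, Matrix.one_apply_eq,
          Matrix.transpose_apply, one_mul]
        rw [hv c a]; ring
      · intro k _ hk
        refine Finset.sum_eq_zero fun c _ => ?_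
        simp [hQdef, Matrix.one_apply, Ne.symm hk]
      · intro h; exact absurd (Finset.mem_univ i) h
    conv_lhs => rw [hQPQ]
    rw [Matrix.mul_apply, Fintype.sum_prod_type]
    rw [Finset.sum_eq_single j]
    · have : ∀ d, (Q * P) (i, a) (j, d) * Q (j, d) (j, b)
          = star (v a) * v b * (star (v d) * ∑ c, v c * P (i, c) (j, d)) := by
        intro d
        rw [hQl (j, d)]
        simp only [hQdef, Matrix.kroneckerMap_apply, Matrix.one_apply_eq,
          Matrix.transpose_apply, one_mul]
        rw [hv b d]; ring
      rw [Finset.sum_congr rfl fun d _ => this d, ← Finset.mul_sum, hNdef]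
      congr 1
      refine Finset.sum_congr rfl fun d _ => ?_
      rw [Finset.mul_sum]
      exact Finset.sum_congr rfl fun c _ => by ring
    · intro l _ hl
      refine Finset.sum_eq_zero fun d _ => ?_
      simp [hQdef, Matrix.one_apply_ne hl]
    · intro h; exact absurd (Finset.mem_univ j) h
  have hN : ∀ i j, N i j = ω i j := by
    intro i j
    have hB := (hmarg (Matrix.single j i 1)).1
    have hR : (ω * Matrix.single j i 1).trace = ω i j := by
      simp [Matrix.trace, Matrix.diag, Matrix.mul_apply, Matrix.single,
        Matrix.of_apply, ite_and, mul_ite, Finset.sum_ite_eq, Finset.sum_ite_eq']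
    have hL : (P * (Matrix.single j i 1 ⊗ₖ (1 : Matrix (Fin n) (Fin n) ℂ))).trace
        = ∑ c, P (i, c) (j, c) := by
      rw [Matrix.trace]
      simp only [Matrix.diag, Matrix.mul_apply, Fintype.sum_prod_type]
      have hterm : ∀ k c, (∑ l, ∑ d, P (k, c) (l, d) *
          (Matrix.single j i 1 ⊗ₖ (1 : Matrix (Fin n) (Fin n) ℂ)) (l, d) (k, c))
          = if k = i then P (i, c) (j, c) else 0 := by
        intro k c
        simp only [Matrix.kroneckerMap_apply, Matrix.single, Matrix.of_apply,
          Matrix.one_apply, ite_and, mul_ite, mul_one, mul_zero, ite_mul, zero_mul]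
        rw [Finset.sum_eq_single j]
        · rw [Finset.sum_eq_single c] <;> simp +contextual [eq_comm]
        · intro l _ hl
          refine Finset.sum_eq_zero fun d _ => ?_
          simp [Ne.symm hl]
        · intro h; exact absurd (Finset.mem_univ j) h
      rw [Finset.sum_congr rfl fun k _ => Finset.sum_congr rfl fun c _ => hterm k c]
      have hite : ∀ k : Fin n, (∑ c, if k = i then P (i, c) (j, c) else 0)
          = if k = i then ∑ c, P (i, c) (j, c) else 0 := fun k => by split <;> simp
      rw [Finset.sum_congr rfl fun k _ => hite k, Finset.sum_ite_eq' Finset.univ i _]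
      simp
    have hsum : ∑ c, P (i, c) (j, c) = N i j := by
      rw [Finset.sum_congr rfl fun c _ => hentry i c j c, ← Finset.sum_mul]
      have h1 : ∑ c, star (v c) * v c = 1 := by
        rw [← hv1]; exact Finset.sum_congr rfl fun c _ => mul_comm _ _
      rw [h1, one_mul]
    rw [← hsum, ← hL, hB, hR]
  ext ⟨i, a⟩ ⟨j, b⟩
  rw [hentry i a j b, hN i j]
  simp only [Matrix.kroneckerMap_apply, Matrix.transpose_apply]
  rw [hv b a]; ring
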